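/- Let λ = {α_1 < ... < α_x} and γ be disjoint finite subsets of ℤ_{>0}, and let σ(α_i) denote the position (rank) of α_i in the increasingly ordered union λ ∪ γ. Then the parity of σ(α_i) + ε(λ∖{α_i}, γ) alternates as i increases: for each i, σ(α_{i+1}) + ε(λ∖{α_{i+1}}, γ) ≡ σ(α_i) + ε(λ∖{α_i}, γ) + 1 (mod 2). -/

import Mathlib

/-- Inversion count `ε(A,B) = Σ_{a∈A} |{b ∈ B : b < a}|`. -/
def eps (A B : Finset ℕ) : ℕ := ∑ a ∈ A, (B.filter (· < a)).card

/-- The (1-based) rank of `a` in the increasingly ordered finite set `T`. -/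
def rankIn (T : Finset ℕ) (a : ℕ) : ℕ := (T.filter (· ≤ a)).card

lemma card_le_orderIso (l : Finset ℕ) {x : ℕ} (hx : l.card = x) (j : Fin x) :
    (l.filter (· ≤ (l.orderIsoOfFin hx j : ℕ))).card = (j : ℕ) + 1 := by
  classical
  set f := l.orderIsoOfFin hx with hf
  have himg : l.filter (· ≤ (f j : ℕ)) =
      (Finset.Iic j).image (fun m => ((f m : ℕ))) := by
    ext y
    simp only [Finset.mem_filter, Finset.mem_image, Finset.mem_Iic]
    constructor
    · rintro ⟨hy, hle⟩
      refine ⟨f.symm ⟨y, hy⟩, ?_, by simp⟩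
      rw [← f.le_iff_le]
      simpa using (show (⟨y, hy⟩ : l) ≤ f j from hle)
    · rintro ⟨m, hm, rfl⟩
      exact ⟨(f m).2, Subtype.coe_le_coe.mpr (f.le_iff_le.mpr hm)⟩
  rw [himg, Finset.card_image_of_injective _ (fun a b hab => f.injective (Subtype.ext hab))]
  simp [Nat.card_Iic]

lemma key (l g : Finset ℕ) (hd : Disjoint l g) {a : ℕ} (ha : a ∈ l) :
    rankIn (l ∪ g) a + eps (l.erase a) g = (l.filter (· ≤ a)).card + eps l g := by
  classical
  have hg : g.filter (· ≤ a) = g.filter (· < a) := by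
    apply Finset.filter_congr
    intro y hy
    have : y ≠ a := fun h => (Finset.disjoint_left.mp hd ha) (h ▸ hy)
    simp [lt_iff_le_and_ne, this]
  have hrank : rankIn (l ∪ g) a = (l.filter (· ≤ a)).card + (g.filter (· < a)).card := by
    rw [rankIn, Finset.filter_union, Finset.card_union_of_disjoint
      (Finset.disjoint_filter_filter hd), hg]
  have heps : eps (l.erase a) g + (g.filter (· < a)).card = eps l g := by
    rw [eps, eps, Finset.sum_erase_add _ _ ha]
  omega

theorem stmt8 (l g : Finset ℕ) (hd : Disjoint l g) (x : ℕ) (hx : l.card = x)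
    (i : ℕ) (h1 : i < x) (h2 : i + 1 < x) :
    ∀ α : Fin x → ℕ, (∀ m, α m = (l.orderIsoOfFin hx m : ℕ)) →
    -- the parity of σ(α_i) + ε(λ∖{α_i}, γ) alternates as i increases
    (rankIn (l ∪ g) (α ⟨i + 1, h2⟩) + eps (l.erase (α ⟨i + 1, h2⟩)) g)
      ≡ (rankIn (l ∪ g) (α ⟨i, h1⟩) + eps (l.erase (α ⟨i, h1⟩)) g + 1) [MOD 2] := by
  intro α hα
  rw [hα, hα]
  have e1 := key l g hd (l.orderIsoOfFin hx ⟨i + 1, h2⟩).2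
  have e2 := key l g hd (l.orderIsoOfFin hx ⟨i, h1⟩).2
  have c1 := card_le_orderIso l hx ⟨i + 1, h2⟩
  have c2 := card_le_orderIso l hx ⟨i, h1⟩
  simp only [Fin.val_mk] at c1 c2
  have : rankIn (l ∪ g) ((l.orderIsoOfFin hx ⟨i + 1, h2⟩ : ℕ)) +
      eps (l.erase ((l.orderIsoOfFin hx ⟨i + 1, h2⟩ : ℕ))) g =
      rankIn (l ∪ g) ((l.orderIsoOfFin hx ⟨i, h1⟩ : ℕ)) +
      eps (l.erase ((l.orderIsoOfFin hx ⟨i, h1⟩ : ℕ))) g + 1 := by omega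
  rw [this]
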